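/- Let N be a 6-dimensional nil evolution algebra over a field F of characteristic ≠ 2 which is associative and indecomposable. Then N admits a natural basis (v_1, …, v_6) such that one of the following holds: (a) there exist nonzero α, β, γ, δ ∈ F with v_1·v_1 = v_6, v_2·v_2 = α·v_6, v_3·v_3 = β·v_6, v_4·v_4 = γ·v_6, v_5·v_5 = δ·v_6, v_6·v_6 = 0 (the algebra N_{6,16}(α,β,γ,δ)); or (b) there exist nonzero α, β, γ ∈ F with v_1·v_1 = v_5, v_2·v_2 = α·v_5 + β·v_6, v_3·v_3 = γ·v_6, v_4·v_4 = v_6, v_5·v_5 = v_6·v_6 = 0 (the algebra N_{6,17}(α,β,γ)); or (c) there exist nonzero α, β, γ, δ ∈ F with α·δ − β·γ ≠ 0 and v_1·v_1 = v_5, v_2·v_2 = α·v_5 + β·v_6, v_3·v_3 = γ·v_5 + δ·v_6, v_4·v_4 = v_6, v_5·v_5 = v_6·v_6 = 0 (the algebra N_{6,18}(α,β,γ,δ)). -/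

import Mathlib

/-- Principal powers: `ppow m a k = a^(k+1)`. -/
def ppow {F A : Type*} [Field F] [AddCommGroup A] [Module F A]
    (m : A →ₗ[F] A →ₗ[F] A) (a : A) : ℕ → A
  | 0 => a
  | k + 1 => m (ppow m a k) a

open Submodule Module

namespace Evo18aux

variable {F A : Type*} [Field F] [AddCommGroup A] [Module F A]

lemma natMul' (m : A →ₗ[F] A →ₗ[F] A) (b : Basis (Fin 6) F A)
    (hb : ∀ i j : Fin 6, i ≠ j → m (b i) (b j) = 0) (i : Fin 6) (y : A) :
    m (b i) y = b.repr y i • m (b i) (b i) := by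
  have h : m (b i) = (b.coord i).smulRight (m (b i) (b i)) := by
    refine b.ext fun j => ?_
    by_cases hj : j = i
    · subst hj; simp [Basis.coord_apply, Basis.repr_self]
    · simp [hb i j (Ne.symm hj), Basis.coord_apply, Basis.repr_self,
        Finsupp.single_eq_of_ne (Ne.symm hj), hj]
  have h2 := LinearMap.congr_fun h y
  simpa [Basis.coord_apply] using h2

lemma sq_ann (m : A →ₗ[F] A →ₗ[F] A) (e : Basis (Fin 6) F A)
    (hcomm : ∀ x y : A, m x y = m y x)
    (hnat : ∀ i j : Fin 6, i ≠ j → m (e i) (e j) = 0)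
    (hnil : ∀ a : A, ∃ k : ℕ, ppow m a k = 0)
    (hassoc : ∀ x y z : A, m (m x y) z = m x (m y z))
    (i : Fin 6) : m (m (e i) (e i)) = 0 := by
  set w := m (e i) (e i) with hw
  set c : F := e.repr w i with hc
  have hpow : ∀ n : ℕ, ppow m (e i) (n+1) = c ^ n • w := by
    intro n
    induction n with
    | zero => simp [ppow, hw]
    | succ k ih =>
      show m (ppow m (e i) (k+1)) (e i) = _
      rw [ih, map_smul, LinearMap.smul_apply]
      have : m w (e i) = c • w := by
        rw [hcomm w (e i)]; exact natMul' m e hnat i w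
      rw [this, smul_smul, ← pow_succ]
  obtain ⟨k, hk⟩ := hnil (e i)
  have hcase : w = 0 ∨ c = 0 := by
    rcases k with _ | n
    · exact absurd hk (e.ne_zero i)
    · rw [hpow n] at hk
      rcases smul_eq_zero.1 hk with h | h
      · rcases n with _ | n'
        · simp at h
        · right; exact pow_eq_zero_iff (Nat.succ_ne_zero n') |>.1 h
      · left; exact h
  rcases hcase with h | h
  · rw [h]; exact map_zero m
  · refine e.ext fun j => ?_
    by_cases hj : j = i
    · subst hj
      rw [LinearMap.zero_apply, hcomm w (e j), natMul' m e hnat j w, ← hc, h, zero_smul]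
    · rw [LinearMap.zero_apply, hw, hassoc, hnat i j (Ne.symm hj), map_zero]

lemma key (m : A →ₗ[F] A →ₗ[F] A) (e : Basis (Fin 6) F A)
    (hindec : ¬ ∃ I J : Submodule F A,
      (∀ x ∈ I, ∀ y : A, m x y ∈ I) ∧ (∀ x ∈ J, ∀ y : A, m x y ∈ J) ∧
      I ≠ ⊥ ∧ J ≠ ⊥ ∧ IsCompl I J)
    (U V W : Submodule F A) (hWU : W ≤ U)
    (hUmul : ∀ u ∈ U, ∀ y : A, m u y = 0)
    (hmulW : ∀ x y : A, m x y ∈ W)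
    (hdisj : Disjoint U V) : U ≤ W := by
  haveI : FiniteDimensional F A := e.finiteDimensional_of_finite
  by_contra hle
  obtain ⟨u0, hu0U, hu0W⟩ := SetLike.not_le_iff_exists.1 hle
  set P : Submodule F A := W ⊔ V with hP
  have hu0P : u0 ∉ P := by
    intro h
    rw [hP, Submodule.mem_sup] at h
    obtain ⟨x, hx, v, hv, hxv⟩ := h
    have hvU : v ∈ U := by
      have : v = u0 - x := by rw [← hxv]; abel
      rw [this]; exact U.sub_mem hu0U (hWU hx)
    have : v = 0 := by
      have h2 := Submodule.mem_inf.2 ⟨hvU, hv⟩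
      rwa [hdisj.eq_bot, Submodule.mem_bot] at h2
    rw [this, add_zero] at hxv
    exact hu0W (hxv ▸ hx)
  obtain ⟨C, hC⟩ := Submodule.exists_isCompl (P ⊔ span F {u0})
  set I : Submodule F A := P ⊔ C with hI
  set J : Submodule F A := span F {u0} with hJ
  have hu0I : u0 ∉ I := by
    intro h
    rw [hI, Submodule.mem_sup] at h
    obtain ⟨p, hp, c, hc, hpc⟩ := h
    have hcQ : c ∈ P ⊔ span F {u0} := by
      have : c = u0 - p := by rw [← hpc]; abel
      rw [this]
      exact Submodule.sub_mem _ (Submodule.mem_sup_right (subset_span rfl))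
        (Submodule.mem_sup_left hp)
    have : c = 0 := (disjoint_def.1 hC.disjoint) c hcQ hc
    rw [this, add_zero] at hpc
    exact hu0P (hpc ▸ hp)
  have hu00 : u0 ≠ 0 := fun h => hu0W (h ▸ W.zero_mem)
  have hcomplJI : IsCompl J I := by
    constructor
    · rw [disjoint_def]
      intro x hxJ hxI
      rw [hJ, Submodule.mem_span_singleton] at hxJ
      obtain ⟨t, rfl⟩ := hxJ
      by_cases ht : t = 0
      · rw [ht, zero_smul]
      · exact absurd (by simpa [ht] using I.smul_mem t⁻¹ hxI) hu0I
    · rw [codisjoint_iff]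
      have h2 := codisjoint_iff.1 hC.codisjoint
      rw [hJ, hI, ← sup_assoc, sup_comm (span F {u0}) P]
      exact h2
  refine hindec ⟨J, I, ?_, ?_, ?_, ?_, ?_⟩
  · intro x hx y
    rw [hJ, Submodule.mem_span_singleton] at hx
    obtain ⟨t, rfl⟩ := hx
    have : m (t • u0) y = 0 := by
      rw [map_smul, LinearMap.smul_apply, hUmul u0 hu0U y, smul_zero]
    rw [this]; exact J.zero_mem
  · intro x hx y
    exact Submodule.mem_sup_left (Submodule.mem_sup_left (hmulW x y))
  · intro h
    rw [hJ] at h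
    exact hu00 (span_eq_bot.1 h u0 rfl)
  · intro h
    have hcompl : IsCompl J I := hcomplJI
    rw [h] at hcompl
    have hJtop : J = ⊤ := by
      have := codisjoint_iff.1 hcompl.codisjoint
      simpa using this
    have h1 : finrank F A = 1 := by
      rw [← finrank_top F A, ← hJtop, hJ, finrank_span_singleton hu00]
    have h6 : finrank F A = 6 := by
      rw [finrank_eq_card_basis e, Fintype.card_fin]
    omega
  · exact hcomplJI

lemma dec (m : A →ₗ[F] A →ₗ[F] A) (e : Basis (Fin 6) F A)
    (hindec : ¬ ∃ I J : Submodule F A,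
      (∀ x ∈ I, ∀ y : A, m x y ∈ I) ∧ (∀ x ∈ J, ∀ y : A, m x y ∈ J) ∧
      I ≠ ⊥ ∧ J ≠ ⊥ ∧ IsCompl I J)
    (f : Fin 6 → A) (k : ℕ) (hk0 : 0 < k) (hk6 : k < 6)
    (hspan : ⊤ ≤ span F (Set.range f))
    (hnatf : ∀ i j : Fin 6, i ≠ j → m (f i) (f j) = 0)
    (hsq1 : ∀ i : Fin 6, (i : ℕ) < k → m (f i) (f i) ∈ span F (f '' {j : Fin 6 | (j : ℕ) < k}))
    (hsq2 : ∀ i : Fin 6, ¬ (i : ℕ) < k →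
      m (f i) (f i) ∈ span F (f '' {j : Fin 6 | ¬ (j : ℕ) < k})) : False := by
  haveI : FiniteDimensional F A := e.finiteDimensional_of_finite
  have hcard : Fintype.card (Fin 6) = finrank F A := by
    rw [finrank_eq_card_basis e]
  set b : Basis (Fin 6) F A := basisOfTopLeSpanOfCardEqFinrank f hspan hcard with hb
  have hbf : ⇑b = f := coe_basisOfTopLeSpanOfCardEqFinrank f hspan hcard
  set T : Set (Fin 6) := {j : Fin 6 | (j : ℕ) < k} with hT
  set I : Submodule F A := span F (f '' T) with hI
  set J : Submodule F A := span F (f '' Tᶜ) with hJ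
  have ideal : ∀ (s : Set (Fin 6)) (S : Submodule F A), S = span F (f '' s) →
      (∀ i ∈ s, m (f i) (f i) ∈ S) → ∀ x ∈ S, ∀ y : A, m x y ∈ S := by
    intro s S hS hsq x hx y
    rw [hS] at hx ⊢
    induction hx using Submodule.span_induction with
    | mem z hz =>
      obtain ⟨i, hi, rfl⟩ := hz
      have : m (f i) y = b.repr y i • m (f i) (f i) := by
        have := natMul' m b (by rw [hbf] at *; exact hnatf) i y
        rw [hbf] at this; exact this
      rw [this]
      exact Submodule.smul_mem _ _ (hS ▸ hsq i hi)
    | zero => rw [map_zero, LinearMap.zero_apply]; exact Submodule.zero_mem _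
    | add u v hu hv ihu ihv => rw [map_add, LinearMap.add_apply]; exact Submodule.add_mem _ ihu ihv
    | smul a u hu ihu => rw [map_smul, LinearMap.smul_apply]; exact Submodule.smul_mem _ _ ihu
  have hidealI : ∀ x ∈ I, ∀ y : A, m x y ∈ I :=
    ideal T I rfl (fun i hi => hsq1 i hi)
  have hidealJ : ∀ x ∈ J, ∀ y : A, m x y ∈ J :=
    ideal Tᶜ J rfl (fun i hi => hsq2 i hi)
  have hIbot : I ≠ ⊥ := by
    intro h
    have h0 : f ⟨0, by norm_num⟩ ∈ I := subset_span ⟨⟨0, by norm_num⟩, by simpa [hT] using hk0, rfl⟩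
    rw [h, Submodule.mem_bot] at h0
    exact b.ne_zero ⟨0, by norm_num⟩ (by rw [hbf]; exact h0)
  have hJbot : J ≠ ⊥ := by
    intro h
    have h0 : f ⟨k, hk6⟩ ∈ J := subset_span ⟨⟨k, hk6⟩, by simp [hT], rfl⟩
    rw [h, Submodule.mem_bot] at h0
    exact b.ne_zero ⟨k, hk6⟩ (by rw [hbf]; exact h0)
  have hcompl : IsCompl I J := by
    constructor
    · have := b.linearIndependent.disjoint_span_image (s := T) (t := Tᶜ) disjoint_compl_right
      rw [hbf] at this
      exact this
    · rw [codisjoint_iff, hI, hJ, ← Submodule.span_union, ← Set.image_union,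
        Set.union_compl_self, Set.image_univ]
      rw [← hbf]; exact b.span_eq
  exact hindec ⟨I, J, hidealI, hidealJ, hIbot, hJbot, hcompl⟩

lemma pair_span (u v x y : A)
    (hx : x ∈ span F ({u, v} : Set A)) (hy : y ∈ span F ({u, v} : Set A))
    (hx0 : x ≠ 0) (hnp : ¬ ∃ t : F, y = t • x) :
    u ∈ span F ({x, y} : Set A) ∧ v ∈ span F ({x, y} : Set A) := by
  obtain ⟨p, q, hxe⟩ := Submodule.mem_span_pair.1 hx
  obtain ⟨p', q', hye⟩ := Submodule.mem_span_pair.1 hy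
  set d : F := p * q' - q * p' with hd
  have hdet : d ≠ 0 := by
    intro hd0
    apply hnp
    by_cases hp : p = 0
    · have hq : q ≠ 0 := by
        intro hq0
        apply hx0
        rw [← hxe, hp, hq0, zero_smul, zero_smul, add_zero]
      have h5 : q * p' = 0 := by linear_combination q' * hp - hd0
      have hp' : p' = 0 := (mul_eq_zero.1 h5).resolve_left hq
      refine ⟨q' / q, ?_⟩
      rw [← hxe, ← hye]
      match_scalars
      · field_simp [hp, hp']
        simp [hp, hp']
      · field_simp
    · refine ⟨p' / p, ?_⟩
      rw [← hxe, ← hye]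
      match_scalars
      · field_simp
      · field_simp
        linear_combination hd0
  constructor
  · refine Submodule.mem_span_pair.2 ⟨q' / d, -(q / d), ?_⟩
    rw [← hxe, ← hye]
    match_scalars
    · field_simp
      ring
    · field_simp
      ring
  · refine Submodule.mem_span_pair.2 ⟨-(p' / d), p / d, ?_⟩
    rw [← hxe, ← hye]
    match_scalars
    · field_simp
      ring
    · field_simp
      ring

lemma caseB (m : A →ₗ[F] A →ₗ[F] A) (hcomm : ∀ x y : A, m x y = m y x)
    (ea eb ec ed wa wb wc wd u v : A)
    (hdim : Fintype.card (Fin 6) = finrank F A)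
    (hab : m ea eb = 0) (hac : m ea ec = 0) (had : m ea ed = 0)
    (hbc : m eb ec = 0) (hbd : m eb ed = 0) (hcd : m ec ed = 0)
    (hwa : m ea ea = wa) (hwb : m eb eb = wb) (hwc : m ec ec = wc) (hwd : m ed ed = wd)
    (hwaann : ∀ y : A, m wa y = 0) (hwdann : ∀ y : A, m wd y = 0)
    (hwamem : wa ∈ span F ({u, v} : Set A)) (hwbmem : wb ∈ span F ({u, v} : Set A))
    (hwdmem : wd ∈ span F ({u, v} : Set A))
    (hwa0 : wa ≠ 0)
    (hγ : ∃ t : F, t ≠ 0 ∧ wc = t • wd)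
    (hnab : ¬ ∃ t : F, wb = t • wa)
    (hnadb : ¬ ∃ t : F, wb = t • wd)
    (hnad : ¬ ∃ t : F, wd = t • wa)
    (hspanT : ⊤ ≤ span F ({ea, eb, ec, ed, u, v} : Set A)) :
    ∃ v' : Basis (Fin 6) F A,
      (∀ i j : Fin 6, i ≠ j → m (v' i) (v' j) = 0) ∧
      ((∃ α β γ δ : F, α ≠ 0 ∧ β ≠ 0 ∧ γ ≠ 0 ∧ δ ≠ 0 ∧
          m (v' 0) (v' 0) = v' 5 ∧
          m (v' 1) (v' 1) = α • v' 5 ∧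
          m (v' 2) (v' 2) = β • v' 5 ∧
          m (v' 3) (v' 3) = γ • v' 5 ∧
          m (v' 4) (v' 4) = δ • v' 5 ∧
          m (v' 5) (v' 5) = 0) ∨
       (∃ α β γ : F, α ≠ 0 ∧ β ≠ 0 ∧ γ ≠ 0 ∧
          m (v' 0) (v' 0) = v' 4 ∧
          m (v' 1) (v' 1) = α • v' 4 + β • v' 5 ∧
          m (v' 2) (v' 2) = γ • v' 5 ∧
          m (v' 3) (v' 3) = v' 5 ∧
          m (v' 4) (v' 4) = 0 ∧
          m (v' 5) (v' 5) = 0) ∨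
       (∃ α β γ δ : F, α ≠ 0 ∧ β ≠ 0 ∧ γ ≠ 0 ∧ δ ≠ 0 ∧
          α * δ - β * γ ≠ 0 ∧
          m (v' 0) (v' 0) = v' 4 ∧
          m (v' 1) (v' 1) = α • v' 4 + β • v' 5 ∧
          m (v' 2) (v' 2) = γ • v' 4 + δ • v' 5 ∧
          m (v' 3) (v' 3) = v' 5 ∧
          m (v' 4) (v' 4) = 0 ∧
          m (v' 5) (v' 5) = 0)) := by
  obtain ⟨huspan, hvspan2⟩ := pair_span u v wa wd hwamem hwdmem hwa0 hnad
  have hwbspan : wb ∈ span F ({wa, wd} : Set A) := by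
    have hsub : ({u, v} : Set A) ⊆ ↑(span F ({wa, wd} : Set A)) := by
      intro x hx
      simp only [Set.mem_insert_iff, Set.mem_singleton_iff] at hx
      rcases hx with rfl | rfl
      · exact huspan
      · exact hvspan2
    exact (span_le.2 hsub) hwbmem
  obtain ⟨α, β, hαβ⟩ := Submodule.mem_span_pair.1 hwbspan
  have hα : α ≠ 0 := by
    intro h0; exact hnadb ⟨β, by rw [← hαβ, h0, zero_smul, zero_add]⟩
  have hβ : β ≠ 0 := by
    intro h0; exact hnab ⟨α, by rw [← hαβ, h0, zero_smul, add_zero]⟩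
  obtain ⟨γ, hγ0, hγc⟩ := hγ
  set vf : Fin 6 → A := ![ea, eb, ec, ed, wa, wd] with hvf
  have hwawd : ({wa, wd} : Set A) ⊆ ↑(span F (Set.range vf)) := by
    intro y hy
    simp only [Set.mem_insert_iff, Set.mem_singleton_iff] at hy
    rcases hy with rfl | rfl
    · exact subset_span ⟨4, rfl⟩
    · exact subset_span ⟨5, rfl⟩
  have hvspan : ⊤ ≤ span F (Set.range vf) := by
    refine le_trans hspanT (span_le.2 ?_)
    intro x hx
    simp only [Set.mem_insert_iff, Set.mem_singleton_iff] at hx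
    rcases hx with rfl | rfl | rfl | rfl | rfl | rfl
    · exact subset_span ⟨0, rfl⟩
    · exact subset_span ⟨1, rfl⟩
    · exact subset_span ⟨2, rfl⟩
    · exact subset_span ⟨3, rfl⟩
    · exact span_le.2 hwawd huspan
    · exact span_le.2 hwawd hvspan2
  set v' : Basis (Fin 6) F A := basisOfTopLeSpanOfCardEqFinrank vf hvspan hdim with hv'def
  have hv : ⇑v' = vf := coe_basisOfTopLeSpanOfCardEqFinrank vf hvspan hdim
  refine ⟨v', ?_, Or.inr (Or.inl ⟨α, β, γ, hα, hβ, hγ0, ?_, ?_, ?_, ?_, ?_, ?_⟩)⟩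
  · intro i j hij
    rw [hv]
    fin_cases i <;> fin_cases j <;>
      first
        | exact absurd rfl hij
        | exact hwaann _
        | exact hwdann _
        | (rw [hcomm]; exact hwaann _)
        | (rw [hcomm]; exact hwdann _)
        | exact hab
        | exact hac
        | exact had
        | exact hbc
        | exact hbd
        | exact hcd
        | (rw [hcomm]
           first
            | exact hab
            | exact hac
            | exact had
            | exact hbc
            | exact hbd
            | exact hcd)
  · rw [hv]; exact hwa
  · rw [hv]
    show m eb eb = α • wa + β • wd
    rw [hwb]; exact hαβ.symm
  · rw [hv]
    show m ec ec = γ • wd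
    rw [hwc]; exact hγc
  · rw [hv]; exact hwd
  · rw [hv]; exact hwaann _
  · rw [hv]; exact hwdann _

lemma caseC (m : A →ₗ[F] A →ₗ[F] A) (hcomm : ∀ x y : A, m x y = m y x)
    (ea eb ec ed wa wb wc wd u v : A)
    (hdim : Fintype.card (Fin 6) = finrank F A)
    (hab : m ea eb = 0) (hac : m ea ec = 0) (had : m ea ed = 0)
    (hbc : m eb ec = 0) (hbd : m eb ed = 0) (hcd : m ec ed = 0)
    (hwa : m ea ea = wa) (hwb : m eb eb = wb) (hwc : m ec ec = wc) (hwd : m ed ed = wd)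
    (hwaann : ∀ y : A, m wa y = 0) (hwdann : ∀ y : A, m wd y = 0)
    (hwamem : wa ∈ span F ({u, v} : Set A)) (hwbmem : wb ∈ span F ({u, v} : Set A))
    (hwcmem : wc ∈ span F ({u, v} : Set A)) (hwdmem : wd ∈ span F ({u, v} : Set A))
    (hwa0 : wa ≠ 0)
    (hnab : ¬ ∃ t : F, wb = t • wa)
    (hnadb : ¬ ∃ t : F, wb = t • wd)
    (hnac : ¬ ∃ t : F, wc = t • wa)
    (hnadc : ¬ ∃ t : F, wc = t • wd)
    (hnbc : ¬ ∃ t : F, wc = t • wb)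
    (hnad : ¬ ∃ t : F, wd = t • wa)
    (hspanT : ⊤ ≤ span F ({ea, eb, ec, ed, u, v} : Set A)) :
    ∃ v' : Basis (Fin 6) F A,
      (∀ i j : Fin 6, i ≠ j → m (v' i) (v' j) = 0) ∧
      ((∃ α β γ δ : F, α ≠ 0 ∧ β ≠ 0 ∧ γ ≠ 0 ∧ δ ≠ 0 ∧
          m (v' 0) (v' 0) = v' 5 ∧
          m (v' 1) (v' 1) = α • v' 5 ∧
          m (v' 2) (v' 2) = β • v' 5 ∧
          m (v' 3) (v' 3) = γ • v' 5 ∧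
          m (v' 4) (v' 4) = δ • v' 5 ∧
          m (v' 5) (v' 5) = 0) ∨
       (∃ α β γ : F, α ≠ 0 ∧ β ≠ 0 ∧ γ ≠ 0 ∧
          m (v' 0) (v' 0) = v' 4 ∧
          m (v' 1) (v' 1) = α • v' 4 + β • v' 5 ∧
          m (v' 2) (v' 2) = γ • v' 5 ∧
          m (v' 3) (v' 3) = v' 5 ∧
          m (v' 4) (v' 4) = 0 ∧
          m (v' 5) (v' 5) = 0) ∨
       (∃ α β γ δ : F, α ≠ 0 ∧ β ≠ 0 ∧ γ ≠ 0 ∧ δ ≠ 0 ∧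
          α * δ - β * γ ≠ 0 ∧
          m (v' 0) (v' 0) = v' 4 ∧
          m (v' 1) (v' 1) = α • v' 4 + β • v' 5 ∧
          m (v' 2) (v' 2) = γ • v' 4 + δ • v' 5 ∧
          m (v' 3) (v' 3) = v' 5 ∧
          m (v' 4) (v' 4) = 0 ∧
          m (v' 5) (v' 5) = 0)) := by
  obtain ⟨huspan, hvspan2⟩ := pair_span u v wa wd hwamem hwdmem hwa0 hnad
  have hwbspan : wb ∈ span F ({wa, wd} : Set A) := by
    have hsub : ({u, v} : Set A) ⊆ ↑(span F ({wa, wd} : Set A)) := by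
      intro x hx
      simp only [Set.mem_insert_iff, Set.mem_singleton_iff] at hx
      rcases hx with rfl | rfl
      · exact huspan
      · exact hvspan2
    exact (span_le.2 hsub) hwbmem
  have hwcspan : wc ∈ span F ({wa, wd} : Set A) := by
    have hsub : ({u, v} : Set A) ⊆ ↑(span F ({wa, wd} : Set A)) := by
      intro x hx
      simp only [Set.mem_insert_iff, Set.mem_singleton_iff] at hx
      rcases hx with rfl | rfl
      · exact huspan
      · exact hvspan2
    exact (span_le.2 hsub) hwcmem
  obtain ⟨α, β, hαβ⟩ := Submodule.mem_span_pair.1 hwbspan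
  obtain ⟨γ, δ, hγδ⟩ := Submodule.mem_span_pair.1 hwcspan
  have hα : α ≠ 0 := by
    intro h0; exact hnadb ⟨β, by rw [← hαβ, h0, zero_smul, zero_add]⟩
  have hβ : β ≠ 0 := by
    intro h0; exact hnab ⟨α, by rw [← hαβ, h0, zero_smul, add_zero]⟩
  have hγ : γ ≠ 0 := by
    intro h0; exact hnadc ⟨δ, by rw [← hγδ, h0, zero_smul, zero_add]⟩
  have hδ : δ ≠ 0 := by
    intro h0; exact hnac ⟨γ, by rw [← hγδ, h0, zero_smul, add_zero]⟩
  have hdet : α * δ - β * γ ≠ 0 := by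
    intro h0
    refine hnbc ⟨γ / α, ?_⟩
    rw [← hαβ, ← hγδ]
    match_scalars
    · field_simp
    · field_simp
      linear_combination h0
  set vf : Fin 6 → A := ![ea, eb, ec, ed, wa, wd] with hvf
  have hwawd : ({wa, wd} : Set A) ⊆ ↑(span F (Set.range vf)) := by
    intro y hy
    simp only [Set.mem_insert_iff, Set.mem_singleton_iff] at hy
    rcases hy with rfl | rfl
    · exact subset_span ⟨4, rfl⟩
    · exact subset_span ⟨5, rfl⟩
  have hvspan : ⊤ ≤ span F (Set.range vf) := by
    refine le_trans hspanT (span_le.2 ?_)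
    intro x hx
    simp only [Set.mem_insert_iff, Set.mem_singleton_iff] at hx
    rcases hx with rfl | rfl | rfl | rfl | rfl | rfl
    · exact subset_span ⟨0, rfl⟩
    · exact subset_span ⟨1, rfl⟩
    · exact subset_span ⟨2, rfl⟩
    · exact subset_span ⟨3, rfl⟩
    · exact span_le.2 hwawd huspan
    · exact span_le.2 hwawd hvspan2
  set v' : Basis (Fin 6) F A := basisOfTopLeSpanOfCardEqFinrank vf hvspan hdim with hv'def
  have hv : ⇑v' = vf := coe_basisOfTopLeSpanOfCardEqFinrank vf hvspan hdim
  refine ⟨v', ?_, Or.inr (Or.inr ⟨α, β, γ, δ, hα, hβ, hγ, hδ, hdet, ?_, ?_, ?_, ?_, ?_, ?_⟩)⟩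
  · intro i j hij
    rw [hv]
    fin_cases i <;> fin_cases j <;>
      first
        | exact absurd rfl hij
        | exact hwaann _
        | exact hwdann _
        | (rw [hcomm]; exact hwaann _)
        | (rw [hcomm]; exact hwdann _)
        | exact hab
        | exact hac
        | exact had
        | exact hbc
        | exact hbd
        | exact hcd
        | (rw [hcomm]
           first
            | exact hab
            | exact hac
            | exact had
            | exact hbc
            | exact hbd
            | exact hcd)
  · rw [hv]; exact hwa
  · rw [hv]
    show m eb eb = α • wa + β • wd
    rw [hwb]; exact hαβ.symm
  · rw [hv]
    show m ec ec = γ • wa + δ • wd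
    rw [hwc]; exact hγδ.symm
  · rw [hv]; exact hwd
  · rw [hv]; exact hwaann _
  · rw [hv]; exact hwdann _


end Evo18aux

open Evo18aux

set_option maxHeartbeats 3200000

/-- a 6-dimensional nil, associative, indecomposable evolution algebra over
a field of characteristic ≠ 2 is isomorphic to one of `N_{6,16}(α,β,γ,δ)`,
`N_{6,17}(α,β,γ)`, `N_{6,18}(α,β,γ,δ)`. -/
theorem nil_assoc_indecomposable_dim6_classification
    (F : Type*) [Field F] (h2 : (2 : F) ≠ 0)
    (A : Type*) [AddCommGroup A] [Module F A]
    (m : A →ₗ[F] A →ₗ[F] A) (hcomm : ∀ x y : A, m x y = m y x)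
    (e : Basis (Fin 6) F A)
    (hnat : ∀ i j : Fin 6, i ≠ j → m (e i) (e j) = 0)
    (hnil : ∀ a : A, ∃ k : ℕ, ppow m a k = 0)
    (hassoc : ∀ x y z : A, m (m x y) z = m x (m y z))
    (hindec : ¬ ∃ I J : Submodule F A,
      (∀ x ∈ I, ∀ y : A, m x y ∈ I) ∧ (∀ x ∈ J, ∀ y : A, m x y ∈ J) ∧
      I ≠ ⊥ ∧ J ≠ ⊥ ∧ IsCompl I J) :
    ∃ v : Basis (Fin 6) F A,
      (∀ i j : Fin 6, i ≠ j → m (v i) (v j) = 0) ∧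
      ((∃ α β γ δ : F, α ≠ 0 ∧ β ≠ 0 ∧ γ ≠ 0 ∧ δ ≠ 0 ∧
          m (v 0) (v 0) = v 5 ∧
          m (v 1) (v 1) = α • v 5 ∧
          m (v 2) (v 2) = β • v 5 ∧
          m (v 3) (v 3) = γ • v 5 ∧
          m (v 4) (v 4) = δ • v 5 ∧
          m (v 5) (v 5) = 0) ∨
       (∃ α β γ : F, α ≠ 0 ∧ β ≠ 0 ∧ γ ≠ 0 ∧
          m (v 0) (v 0) = v 4 ∧
          m (v 1) (v 1) = α • v 4 + β • v 5 ∧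
          m (v 2) (v 2) = γ • v 5 ∧
          m (v 3) (v 3) = v 5 ∧
          m (v 4) (v 4) = 0 ∧
          m (v 5) (v 5) = 0) ∨
       (∃ α β γ δ : F, α ≠ 0 ∧ β ≠ 0 ∧ γ ≠ 0 ∧ δ ≠ 0 ∧
          α * δ - β * γ ≠ 0 ∧
          m (v 0) (v 0) = v 4 ∧
          m (v 1) (v 1) = α • v 4 + β • v 5 ∧
          m (v 2) (v 2) = γ • v 4 + δ • v 5 ∧
          m (v 3) (v 3) = v 5 ∧
          m (v 4) (v 4) = 0 ∧
          m (v 5) (v 5) = 0)) := by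
  classical
  haveI : FiniteDimensional F A := e.finiteDimensional_of_finite
  set w : Fin 6 → A := fun i => m (e i) (e i) with hwdef
  have Hw : ∀ i : Fin 6, ∀ y : A, m (w i) y = 0 := by
    intro i y
    have h := sq_ann m e hcomm hnat hnil hassoc i
    show m (m (e i) (e i)) y = 0
    rw [h, LinearMap.zero_apply]
  have B1 : ∀ (i : Fin 6) (y : A), m (e i) y = e.repr y i • w i := fun i y =>
    natMul' m e hnat i y
  have L2 : ∀ i j : Fin 6, w j ≠ 0 → e.repr (w i) j = 0 := by
    intro i j hj
    have h0 : m (e j) (w i) = 0 := by rw [hcomm]; exact Hw i (e j)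
    rw [B1 j (w i)] at h0
    exact (smul_eq_zero.1 h0).resolve_right hj
  set Zset : Set (Fin 6) := {i | w i = 0} with hZset
  have hwZ : ∀ i : Fin 6, w i ∈ span F (e '' Zset) := by
    intro i
    rw [← e.sum_repr (w i)]
    refine Submodule.sum_mem _ fun j _ => ?_
    by_cases hj : w j = 0
    · exact Submodule.smul_mem _ _ (subset_span ⟨j, hj, rfl⟩)
    · rw [L2 i j hj, zero_smul]; exact Submodule.zero_mem _
  set Sf : Finset (Fin 6) := Finset.univ.filter (fun i => ¬ w i = 0) with hSf
  set Zf : Finset (Fin 6) := Finset.univ.filter (fun i => w i = 0) with hZf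
  set U : Submodule F A := span F (e '' Zset) with hU
  set W : Submodule F A := span F ↑(Sf.image w) with hW
  have hwW : ∀ i : Fin 6, w i ∈ W := by
    intro i
    by_cases hi : w i = 0
    · rw [hi]; exact W.zero_mem
    · exact subset_span (by simp [hSf, Finset.mem_image]; exact ⟨i, hi, rfl⟩)
  have hmulW : ∀ x y : A, m x y ∈ W := by
    intro x y
    rw [← e.sum_repr x, map_sum, LinearMap.sum_apply]
    refine Submodule.sum_mem _ fun i _ => ?_
    rw [map_smul, LinearMap.smul_apply, B1 i y]
    exact W.smul_mem _ (W.smul_mem _ (hwW i))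
  have hWU : W ≤ U := by
    rw [hW, span_le]
    intro x hx
    rw [Finset.coe_image, Set.mem_image] at hx
    obtain ⟨i, _, rfl⟩ := hx
    exact hwZ i
  have hUmul : ∀ u ∈ U, ∀ y : A, m u y = 0 := by
    have hker : U ≤ LinearMap.ker m := by
      rw [hU, span_le]
      rintro x ⟨z, hz, rfl⟩
      rw [SetLike.mem_coe, LinearMap.mem_ker]
      refine e.ext fun j => ?_
      rw [LinearMap.zero_apply, B1 z (e j)]
      rw [hZset] at hz
      rw [hz, smul_zero]
    intro u hu y
    have := hker hu
    rw [LinearMap.mem_ker] at this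
    rw [this, LinearMap.zero_apply]
  have hdisjUV : Disjoint U (span F (e '' Zsetᶜ)) :=
    e.linearIndependent.disjoint_span_image disjoint_compl_right
  have KEY : U ≤ W := key m e hindec U (span F (e '' Zsetᶜ)) W hWU hUmul hmulW hdisjUV
  have hZfZ : (↑Zf : Set (Fin 6)) = Zset := by
    ext i; simp [hZf, hZset]
  have hcards : Zf.card + Sf.card = 6 := by
    have := Finset.card_filter_add_card_filter_not
      (s := (Finset.univ : Finset (Fin 6))) (p := fun i => w i = 0)
    simpa [hZf, hSf] using this
  -- dimension bound : Zf.card ≤ Sf.card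
  have hzr : Zf.card ≤ Sf.card := by
    have h1 : Zf.card ≤ finrank F W := by
      have hg : ∀ i : {x // x ∈ Zf}, e ↑i ∈ W := by
        intro i
        refine KEY (subset_span ⟨↑i, ?_, rfl⟩)
        have := i.2
        rw [← hZfZ]; exact this
      set g : {x // x ∈ Zf} → W := fun i => ⟨e ↑i, hg i⟩ with hgdef
      have hgind : LinearIndependent F g := by
        apply LinearIndependent.of_comp W.subtype
        have : (W.subtype ∘ g) = (e ∘ fun i : {x // x ∈ Zf} => (↑i : Fin 6)) := rfl
        rw [this]
        exact e.linearIndependent.comp _ Subtype.val_injective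
      have := hgind.fintype_card_le_finrank
      simpa [Fintype.card_coe] using this
    have h2 : finrank F W ≤ (Sf.image w).card := finrank_span_finset_le_card _
    have h3 : (Sf.image w).card ≤ Sf.card := Finset.card_image_le
    omega
  have hr6 : Sf.card ≠ 6 := by
    intro h6
    have hZ0 : Zf.card = 0 := by omega
    have hZe : Zset = ∅ := by
      rw [← hZfZ, Finset.card_eq_zero.1 hZ0]; simp
    have := hwZ 0
    rw [hU, hZe] at this
    simp at this
    have : (0 : Fin 6) ∈ Zf := by simp [hZf]; exact this
    rw [Finset.card_eq_zero.1 hZ0] at this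
    simp at this
  have hr : Sf.card = 3 ∨ Sf.card = 4 ∨ Sf.card = 5 := by omega
  have hcard : Fintype.card (Fin 6) = finrank F A := by
    rw [finrank_eq_card_basis e]
  have hcover : ∀ j : Fin 6, j ∈ Sf ∨ j ∈ Zf := by
    intro j
    by_cases hj : w j = 0
    · right; simp [hZf, hj]
    · left; simp [hSf, hj]
  rcases hr with h3 | h4 | h5
  · -- r = 3 : always decomposable, contradiction
    exfalso
    obtain ⟨a, b, c', hab, hac, hbc, hS3⟩ := Finset.card_eq_three.1 h3
    have hmemS : ∀ i : Fin 6, i ∈ Sf ↔ (i = a ∨ i = b ∨ i = c') := by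
      intro i; rw [hS3]; simp
    set f : Fin 6 → A := ![e a, w a, e b, e c', w b, w c'] with hf
    have hWle : W ≤ span F (Set.range f) := by
      rw [hW, span_le]
      intro x hx
      rw [Finset.coe_image, Set.mem_image] at hx
      obtain ⟨i, hi, rfl⟩ := hx
      rcases (hmemS i).1 hi with rfl | rfl | rfl
      · exact subset_span ⟨1, rfl⟩
      · exact subset_span ⟨4, rfl⟩
      · exact subset_span ⟨5, rfl⟩
    have hspan : ⊤ ≤ span F (Set.range f) := by
      refine le_trans (le_of_eq e.span_eq.symm) (span_le.2 ?_)
      rintro x ⟨j, rfl⟩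
      rcases hcover j with hj | hj
      · rcases (hmemS j).1 hj with rfl | rfl | rfl
        · exact subset_span ⟨0, rfl⟩
        · exact subset_span ⟨2, rfl⟩
        · exact subset_span ⟨3, rfl⟩
      · refine hWle (KEY (subset_span ⟨j, ?_, rfl⟩))
        rw [← hZfZ]; exact hj
    have hnatf : ∀ i j : Fin 6, i ≠ j → m (f i) (f j) = 0 := by
      intro i j hij
      fin_cases i <;> fin_cases j <;>
        first
          | exact absurd rfl hij
          | exact Hw _ _
          | (rw [hcomm]; exact Hw _ _)
          | exact hnat _ _ hab
          | exact hnat _ _ hac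
          | exact hnat _ _ hbc
          | exact hnat _ _ (Ne.symm hab)
          | exact hnat _ _ (Ne.symm hac)
          | exact hnat _ _ (Ne.symm hbc)
    refine (dec m e hindec f 2 (by norm_num) (by norm_num) hspan hnatf ?_ ?_).elim
    · intro i hi
      fin_cases i
      · exact subset_span ⟨1, by norm_num, rfl⟩
      · show m (w a) (w a) ∈ _
        rw [Hw]; exact Submodule.zero_mem _
      all_goals simp at hi
    · intro i hi
      fin_cases i
      · simp at hi
      · simp at hi
      · exact subset_span ⟨4, by decide, rfl⟩
      · exact subset_span ⟨5, by decide, rfl⟩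
      · show m (w b) (w b) ∈ _
        rw [Hw]; exact Submodule.zero_mem _
      · show m (w c') (w c') ∈ _
        rw [Hw]; exact Submodule.zero_mem _
  · -- r = 4
    obtain ⟨z0, z1, hz01, hzf2⟩ := Finset.card_eq_two.1 (show Zf.card = 2 by omega)
    set σ : Fin 4 ≃o {x // x ∈ Sf} := Sf.orderIsoOfFin h4 with hσ
    set s : Fin 4 → Fin 6 := fun k => ↑(σ k) with hs
    have hsinj : Function.Injective s := fun a b h => σ.injective (Subtype.ext h)
    have hsW : ∀ k, w (s k) ≠ 0 := fun k => (Finset.mem_filter.1 (σ k).2).2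
    have hss : ∀ k l : Fin 4, k ≠ l → s k ≠ s l := fun k l hkl h => hkl (hsinj h)
    have hScover : ∀ i ∈ Sf, ∃ k, s k = i := fun i hi => ⟨σ.symm ⟨i, hi⟩, by simp [hs]⟩
    have hSlist : ∀ i ∈ Sf, i = s 0 ∨ i = s 1 ∨ i = s 2 ∨ i = s 3 := by
      intro i hi
      obtain ⟨k, rfl⟩ := hScover i hi
      fin_cases k
      · exact Or.inl rfl
      · exact Or.inr (Or.inl rfl)
      · exact Or.inr (Or.inr (Or.inl rfl))
      · exact Or.inr (Or.inr (Or.inr rfl))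
    have hZs : Zset = {z0, z1} := by rw [← hZfZ, hzf2]; simp
    have hwmem : ∀ k, w (s k) ∈ span F ({e z0, e z1} : Set A) := by
      intro k
      have hk := hwZ (s k)
      rw [hU, hZs] at hk
      rwa [Set.image_insert_eq, Set.image_singleton] at hk
    have hcov6 : ∀ j : Fin 6, j = s 0 ∨ j = s 1 ∨ j = s 2 ∨ j = s 3 ∨ j = z0 ∨ j = z1 := by
      intro j
      rcases hcover j with hj | hj
      · rcases hSlist j hj with h | h | h | h <;> tauto
      · rw [hzf2] at hj
        simp only [Finset.mem_insert, Finset.mem_singleton] at hj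
        tauto
    have parS : ∀ x y : A, y ≠ 0 → (∃ t : F, y = t • x) → ∃ t : F, t ≠ 0 ∧ x = t • y := by
      rintro x y hy ⟨t, ht⟩
      have ht0 : t ≠ 0 := by rintro rfl; rw [zero_smul] at ht; exact hy ht
      exact ⟨t⁻¹, inv_ne_zero ht0, by rw [ht, smul_smul, inv_mul_cancel₀ ht0, one_smul]⟩
    have parT : ∀ x y z : A, (∃ t : F, y = t • x) → (∃ t : F, z = t • y) →
        ∃ t : F, z = t • x := by
      rintro x y z ⟨t, ht⟩ ⟨t', ht'⟩
      exact ⟨t' * t, by rw [ht', ht, smul_smul]⟩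
    have hspanTp : ∀ x1 x2 x3 x4 : Fin 6,
        (∀ j : Fin 6, j = x1 ∨ j = x2 ∨ j = x3 ∨ j = x4 ∨ j = z0 ∨ j = z1) →
        ⊤ ≤ span F ({e x1, e x2, e x3, e x4, e z0, e z1} : Set A) := by
      intro x1 x2 x3 x4 hc
      refine le_trans (le_of_eq e.span_eq.symm) (span_le.2 ?_)
      rintro x ⟨j, rfl⟩
      rcases hc j with rfl | rfl | rfl | rfl | rfl | rfl <;> exact subset_span (by simp)
    have dec22 : ∀ a b c d : Fin 6, a ≠ b → a ≠ c → a ≠ d → b ≠ c → b ≠ d → c ≠ d →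
        (∀ i ∈ Sf, i = a ∨ i = b ∨ i = c ∨ i = d) →
        (∃ t : F, w b = t • w a) → (∃ t : F, w d = t • w c) → False := by
      intro a b c d hab hac had hbc hbd hcd hcov hpab hpcd
      obtain ⟨t, ht⟩ := hpab
      obtain ⟨t', ht'⟩ := hpcd
      set f : Fin 6 → A := ![e a, e b, w a, e c, e d, w c] with hf
      have hWle : W ≤ span F (Set.range f) := by
        rw [hW, span_le]
        intro x hx
        rw [Finset.coe_image, Set.mem_image] at hx
        obtain ⟨i, hi, rfl⟩ := hx
        rcases hcov i hi with rfl | rfl | rfl | rfl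
        · exact subset_span ⟨2, rfl⟩
        · rw [ht]; exact Submodule.smul_mem _ _ (subset_span ⟨2, rfl⟩)
        · exact subset_span ⟨5, rfl⟩
        · rw [ht']; exact Submodule.smul_mem _ _ (subset_span ⟨5, rfl⟩)
      have hspanf : ⊤ ≤ span F (Set.range f) := by
        refine le_trans (le_of_eq e.span_eq.symm) (span_le.2 ?_)
        rintro x ⟨j, rfl⟩
        rcases hcover j with hj | hj
        · rcases hcov j hj with rfl | rfl | rfl | rfl
          · exact subset_span ⟨0, rfl⟩
          · exact subset_span ⟨1, rfl⟩
          · exact subset_span ⟨3, rfl⟩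
          · exact subset_span ⟨4, rfl⟩
        · refine hWle (KEY (subset_span ⟨j, ?_, rfl⟩))
          rw [← hZfZ]; exact hj
      have hnatf : ∀ i j : Fin 6, i ≠ j → m (f i) (f j) = 0 := by
        intro i j hij
        fin_cases i <;> fin_cases j <;>
          first
            | exact absurd rfl hij
            | exact Hw _ _
            | (rw [hcomm]; exact Hw _ _)
            | exact hnat _ _ hab
            | exact hnat _ _ hac
            | exact hnat _ _ had
            | exact hnat _ _ hbc
            | exact hnat _ _ hbd
            | exact hnat _ _ hcd
            | exact hnat _ _ (Ne.symm hab)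
            | exact hnat _ _ (Ne.symm hac)
            | exact hnat _ _ (Ne.symm had)
            | exact hnat _ _ (Ne.symm hbc)
            | exact hnat _ _ (Ne.symm hbd)
            | exact hnat _ _ (Ne.symm hcd)
      refine dec m e hindec f 3 (by norm_num) (by norm_num) hspanf hnatf ?_ ?_
      · intro i hi
        fin_cases i
        · exact subset_span ⟨2, by decide, rfl⟩
        · show w b ∈ _
          rw [ht]
          exact Submodule.smul_mem _ _ (subset_span ⟨2, by decide, rfl⟩)
        · show m (w a) (w a) ∈ _
          rw [Hw]; exact Submodule.zero_mem _
        all_goals simp at hi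
      · intro i hi
        fin_cases i
        · simp at hi
        · simp at hi
        · simp at hi
        · exact subset_span ⟨5, by decide, rfl⟩
        · show w d ∈ _
          rw [ht']
          exact Submodule.smul_mem _ _ (subset_span ⟨5, by decide, rfl⟩)
        · show m (w c) (w c) ∈ _
          rw [Hw]; exact Submodule.zero_mem _
    have dec31 : ∀ a b c d : Fin 6, a ≠ b → a ≠ c → a ≠ d → b ≠ c → b ≠ d → c ≠ d →
        (∀ i ∈ Sf, i = a ∨ i = b ∨ i = c ∨ i = d) →
        (∃ t : F, w c = t • w b) → (∃ t : F, w d = t • w b) → False := by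
      intro a b c d hab hac had hbc hbd hcd hcov hpbc hpbd
      obtain ⟨t, ht⟩ := hpbc
      obtain ⟨t', ht'⟩ := hpbd
      set f : Fin 6 → A := ![e a, w a, e b, e c, e d, w b] with hf
      have hWle : W ≤ span F (Set.range f) := by
        rw [hW, span_le]
        intro x hx
        rw [Finset.coe_image, Set.mem_image] at hx
        obtain ⟨i, hi, rfl⟩ := hx
        rcases hcov i hi with rfl | rfl | rfl | rfl
        · exact subset_span ⟨1, rfl⟩
        · exact subset_span ⟨5, rfl⟩
        · rw [ht]; exact Submodule.smul_mem _ _ (subset_span ⟨5, rfl⟩)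
        · rw [ht']; exact Submodule.smul_mem _ _ (subset_span ⟨5, rfl⟩)
      have hspanf : ⊤ ≤ span F (Set.range f) := by
        refine le_trans (le_of_eq e.span_eq.symm) (span_le.2 ?_)
        rintro x ⟨j, rfl⟩
        rcases hcover j with hj | hj
        · rcases hcov j hj with rfl | rfl | rfl | rfl
          · exact subset_span ⟨0, rfl⟩
          · exact subset_span ⟨2, rfl⟩
          · exact subset_span ⟨3, rfl⟩
          · exact subset_span ⟨4, rfl⟩
        · refine hWle (KEY (subset_span ⟨j, ?_, rfl⟩))
          rw [← hZfZ]; exact hj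
      have hnatf : ∀ i j : Fin 6, i ≠ j → m (f i) (f j) = 0 := by
        intro i j hij
        fin_cases i <;> fin_cases j <;>
          first
            | exact absurd rfl hij
            | exact Hw _ _
            | (rw [hcomm]; exact Hw _ _)
            | exact hnat _ _ hab
            | exact hnat _ _ hac
            | exact hnat _ _ had
            | exact hnat _ _ hbc
            | exact hnat _ _ hbd
            | exact hnat _ _ hcd
            | exact hnat _ _ (Ne.symm hab)
            | exact hnat _ _ (Ne.symm hac)
            | exact hnat _ _ (Ne.symm had)
            | exact hnat _ _ (Ne.symm hbc)
            | exact hnat _ _ (Ne.symm hbd)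
            | exact hnat _ _ (Ne.symm hcd)
      refine dec m e hindec f 2 (by norm_num) (by norm_num) hspanf hnatf ?_ ?_
      · intro i hi
        fin_cases i
        · exact subset_span ⟨1, by decide, rfl⟩
        · show m (w a) (w a) ∈ _
          rw [Hw]; exact Submodule.zero_mem _
        all_goals simp at hi
      · intro i hi
        fin_cases i
        · simp at hi
        · simp at hi
        · exact subset_span ⟨5, by decide, rfl⟩
        · show w c ∈ _
          rw [ht]
          exact Submodule.smul_mem _ _ (subset_span ⟨5, by decide, rfl⟩)
        · show w d ∈ _
          rw [ht']
          exact Submodule.smul_mem _ _ (subset_span ⟨5, by decide, rfl⟩)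
        · show m (w b) (w b) ∈ _
          rw [Hw]; exact Submodule.zero_mem _
    by_cases h01 : ∃ t : F, w (s 1) = t • w (s 0)
    · by_cases h23 : ∃ t : F, w (s 3) = t • w (s 2)
      · exact (dec22 (s 0) (s 1) (s 2) (s 3) (hss 0 1 (by decide)) (hss 0 2 (by decide))
          (hss 0 3 (by decide)) (hss 1 2 (by decide)) (hss 1 3 (by decide)) (hss 2 3 (by decide))
          hSlist h01 h23).elim
      · by_cases h02 : ∃ t : F, w (s 2) = t • w (s 0)
        · exact (dec31 (s 3) (s 0) (s 1) (s 2) (hss 3 0 (by decide)) (hss 3 1 (by decide))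
            (hss 3 2 (by decide)) (hss 0 1 (by decide)) (hss 0 2 (by decide)) (hss 1 2 (by decide))
            (fun i hi => by rcases hSlist i hi with h|h|h|h <;> tauto) h01 h02).elim
        · by_cases h03 : ∃ t : F, w (s 3) = t • w (s 0)
          · exact (dec31 (s 2) (s 0) (s 1) (s 3) (hss 2 0 (by decide)) (hss 2 1 (by decide))
              (hss 2 3 (by decide)) (hss 0 1 (by decide)) (hss 0 3 (by decide)) (hss 1 3 (by decide))
              (fun i hi => by rcases hSlist i hi with h|h|h|h <;> tauto) h01 h03).elim
          · -- only pair (0,1)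
            refine caseB m hcomm (e (s 2)) (e (s 3)) (e (s 0)) (e (s 1)) (w (s 2)) (w (s 3)) (w (s 0)) (w (s 1)) (e z0) (e z1) hcard (hnat _ _ (hss 2 3 (by decide))) (hnat _ _ (hss 2 0 (by decide))) (hnat _ _ (hss 2 1 (by decide))) (hnat _ _ (hss 3 0 (by decide))) (hnat _ _ (hss 3 1 (by decide))) (hnat _ _ (hss 0 1 (by decide))) rfl rfl rfl rfl (Hw (s 2)) (Hw (s 1)) (hwmem 2) (hwmem 3) (hwmem 1) (hsW 2) ?_ ?_ ?_ ?_ (hspanTp (s 2) (s 3) (s 0) (s 1) (fun j' => by rcases hcov6 j' with h|h|h|h|h|h <;> tauto))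
            · exact parS (w (s 0)) (w (s 1)) (hsW 1) h01
            · exact h23
            · rintro h
              exact h03 (parT (w (s 0)) (w (s 1)) (w (s 3)) h01 h)
            · rintro h
              obtain ⟨u, -, hu⟩ := parS (w (s 2)) (w (s 1)) (hsW 1) h
              exact h02 (parT (w (s 0)) (w (s 1)) (w (s 2)) h01 ⟨u, hu⟩)
    · by_cases h02 : ∃ t : F, w (s 2) = t • w (s 0)
      · by_cases h13 : ∃ t : F, w (s 3) = t • w (s 1)
        · exact (dec22 (s 0) (s 2) (s 1) (s 3) (hss 0 2 (by decide)) (hss 0 1 (by decide))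
            (hss 0 3 (by decide)) (hss 2 1 (by decide)) (hss 2 3 (by decide)) (hss 1 3 (by decide))
            (fun i hi => by rcases hSlist i hi with h|h|h|h <;> tauto) h02 h13).elim
        · by_cases h03 : ∃ t : F, w (s 3) = t • w (s 0)
          · exact (dec31 (s 1) (s 0) (s 2) (s 3) (hss 1 0 (by decide)) (hss 1 2 (by decide))
              (hss 1 3 (by decide)) (hss 0 2 (by decide)) (hss 0 3 (by decide)) (hss 2 3 (by decide))
              (fun i hi => by rcases hSlist i hi with h|h|h|h <;> tauto) h02 h03).elim
          · -- only pair (0,2)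
            refine caseB m hcomm (e (s 1)) (e (s 3)) (e (s 0)) (e (s 2)) (w (s 1)) (w (s 3)) (w (s 0)) (w (s 2)) (e z0) (e z1) hcard (hnat _ _ (hss 1 3 (by decide))) (hnat _ _ (hss 1 0 (by decide))) (hnat _ _ (hss 1 2 (by decide))) (hnat _ _ (hss 3 0 (by decide))) (hnat _ _ (hss 3 2 (by decide))) (hnat _ _ (hss 0 2 (by decide))) rfl rfl rfl rfl (Hw (s 1)) (Hw (s 2)) (hwmem 1) (hwmem 3) (hwmem 2) (hsW 1) ?_ ?_ ?_ ?_ (hspanTp (s 1) (s 3) (s 0) (s 2) (fun j' => by rcases hcov6 j' with h|h|h|h|h|h <;> tauto))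
            · exact parS (w (s 0)) (w (s 2)) (hsW 2) h02
            · exact h13
            · rintro h
              exact h03 (parT (w (s 0)) (w (s 2)) (w (s 3)) h02 h)
            · rintro h
              obtain ⟨u, -, hu⟩ := parS (w (s 1)) (w (s 2)) (hsW 2) h
              exact h01 (parT (w (s 0)) (w (s 2)) (w (s 1)) h02 ⟨u, hu⟩)
      · by_cases h03 : ∃ t : F, w (s 3) = t • w (s 0)
        · by_cases h12 : ∃ t : F, w (s 2) = t • w (s 1)
          · exact (dec22 (s 0) (s 3) (s 1) (s 2) (hss 0 3 (by decide)) (hss 0 1 (by decide))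
              (hss 0 2 (by decide)) (hss 3 1 (by decide)) (hss 3 2 (by decide)) (hss 1 2 (by decide))
              (fun i hi => by rcases hSlist i hi with h|h|h|h <;> tauto) h03 h12).elim
          · -- only pair (0,3)
            refine caseB m hcomm (e (s 1)) (e (s 2)) (e (s 0)) (e (s 3)) (w (s 1)) (w (s 2)) (w (s 0)) (w (s 3)) (e z0) (e z1) hcard (hnat _ _ (hss 1 2 (by decide))) (hnat _ _ (hss 1 0 (by decide))) (hnat _ _ (hss 1 3 (by decide))) (hnat _ _ (hss 2 0 (by decide))) (hnat _ _ (hss 2 3 (by decide))) (hnat _ _ (hss 0 3 (by decide))) rfl rfl rfl rfl (Hw (s 1)) (Hw (s 3)) (hwmem 1) (hwmem 2) (hwmem 3) (hsW 1) ?_ ?_ ?_ ?_ (hspanTp (s 1) (s 2) (s 0) (s 3) (fun j' => by rcases hcov6 j' with h|h|h|h|h|h <;> tauto))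
            · exact parS (w (s 0)) (w (s 3)) (hsW 3) h03
            · exact h12
            · rintro h
              exact h02 (parT (w (s 0)) (w (s 3)) (w (s 2)) h03 h)
            · rintro h
              obtain ⟨u, -, hu⟩ := parS (w (s 1)) (w (s 3)) (hsW 3) h
              exact h01 (parT (w (s 0)) (w (s 3)) (w (s 1)) h03 ⟨u, hu⟩)
        · by_cases h12 : ∃ t : F, w (s 2) = t • w (s 1)
          · by_cases h13 : ∃ t : F, w (s 3) = t • w (s 1)
            · exact (dec31 (s 0) (s 1) (s 2) (s 3) (hss 0 1 (by decide)) (hss 0 2 (by decide))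
                (hss 0 3 (by decide)) (hss 1 2 (by decide)) (hss 1 3 (by decide)) (hss 2 3 (by decide))
                hSlist h12 h13).elim
            · -- only pair (1,2)
              refine caseB m hcomm (e (s 0)) (e (s 3)) (e (s 1)) (e (s 2)) (w (s 0)) (w (s 3)) (w (s 1)) (w (s 2)) (e z0) (e z1) hcard (hnat _ _ (hss 0 3 (by decide))) (hnat _ _ (hss 0 1 (by decide))) (hnat _ _ (hss 0 2 (by decide))) (hnat _ _ (hss 3 1 (by decide))) (hnat _ _ (hss 3 2 (by decide))) (hnat _ _ (hss 1 2 (by decide))) rfl rfl rfl rfl (Hw (s 0)) (Hw (s 2)) (hwmem 0) (hwmem 3) (hwmem 2) (hsW 0) ?_ ?_ ?_ ?_ (hspanTp (s 0) (s 3) (s 1) (s 2) (fun j' => by rcases hcov6 j' with h|h|h|h|h|h <;> tauto))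
              · exact parS (w (s 1)) (w (s 2)) (hsW 2) h12
              · exact h03
              · rintro h
                exact h13 (parT (w (s 1)) (w (s 2)) (w (s 3)) h12 h)
              · exact h02
          · by_cases h13 : ∃ t : F, w (s 3) = t • w (s 1)
            · -- only pair (1,3)
              refine caseB m hcomm (e (s 0)) (e (s 2)) (e (s 1)) (e (s 3)) (w (s 0)) (w (s 2)) (w (s 1)) (w (s 3)) (e z0) (e z1) hcard (hnat _ _ (hss 0 2 (by decide))) (hnat _ _ (hss 0 1 (by decide))) (hnat _ _ (hss 0 3 (by decide))) (hnat _ _ (hss 2 1 (by decide))) (hnat _ _ (hss 2 3 (by decide))) (hnat _ _ (hss 1 3 (by decide))) rfl rfl rfl rfl (Hw (s 0)) (Hw (s 3)) (hwmem 0) (hwmem 2) (hwmem 3) (hsW 0) ?_ ?_ ?_ ?_ (hspanTp (s 0) (s 2) (s 1) (s 3) (fun j' => by rcases hcov6 j' with h|h|h|h|h|h <;> tauto))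
              · exact parS (w (s 1)) (w (s 3)) (hsW 3) h13
              · exact h02
              · rintro h
                exact h12 (parT (w (s 1)) (w (s 3)) (w (s 2)) h13 h)
              · exact h03
            · by_cases h23 : ∃ t : F, w (s 3) = t • w (s 2)
              · -- only pair (2,3)
                refine caseB m hcomm (e (s 0)) (e (s 1)) (e (s 2)) (e (s 3)) (w (s 0)) (w (s 1)) (w (s 2)) (w (s 3)) (e z0) (e z1) hcard (hnat _ _ (hss 0 1 (by decide))) (hnat _ _ (hss 0 2 (by decide))) (hnat _ _ (hss 0 3 (by decide))) (hnat _ _ (hss 1 2 (by decide))) (hnat _ _ (hss 1 3 (by decide))) (hnat _ _ (hss 2 3 (by decide))) rfl rfl rfl rfl (Hw (s 0)) (Hw (s 3)) (hwmem 0) (hwmem 1) (hwmem 3) (hsW 0) ?_ ?_ ?_ ?_ (hspanTp (s 0) (s 1) (s 2) (s 3) (fun j' => by rcases hcov6 j' with h|h|h|h|h|h <;> tauto))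
                · exact parS (w (s 2)) (w (s 3)) (hsW 3) h23
                · exact h01
                · rintro h
                  obtain ⟨u, -, hu⟩ := parS (w (s 3)) (w (s 1)) (hsW 1) h
                  exact h13 ⟨u, hu⟩
                · exact h03
              · -- no parallel pairs : case (c)
                refine caseC m hcomm (e (s 0)) (e (s 1)) (e (s 2)) (e (s 3)) (w (s 0)) (w (s 1)) (w (s 2)) (w (s 3)) (e z0) (e z1) hcard (hnat _ _ (hss 0 1 (by decide))) (hnat _ _ (hss 0 2 (by decide))) (hnat _ _ (hss 0 3 (by decide))) (hnat _ _ (hss 1 2 (by decide))) (hnat _ _ (hss 1 3 (by decide))) (hnat _ _ (hss 2 3 (by decide))) rfl rfl rfl rfl (Hw (s 0)) (Hw (s 3)) (hwmem 0) (hwmem 1) (hwmem 2) (hwmem 3) (hsW 0) h01 ?_ h02 ?_ h12 h03 (hspanTp (s 0) (s 1) (s 2) (s 3) (fun j' => by rcases hcov6 j' with h|h|h|h|h|h <;> tauto))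
                · rintro h
                  obtain ⟨u, -, hu⟩ := parS (w (s 3)) (w (s 1)) (hsW 1) h
                  exact h13 ⟨u, hu⟩
                · rintro h
                  obtain ⟨u, -, hu⟩ := parS (w (s 3)) (w (s 2)) (hsW 2) h
                  exact h23 ⟨u, hu⟩
  · -- r = 5 : case (a)
    set σ : Fin 5 ≃o {x // x ∈ Sf} := Sf.orderIsoOfFin h5 with hσ
    set s : Fin 5 → Fin 6 := fun k => ↑(σ k) with hs
    have hsinj : Function.Injective s := fun a b h => σ.injective (Subtype.ext h)
    have hsW : ∀ k, w (s k) ≠ 0 := fun k => (Finset.mem_filter.1 (σ k).2).2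
    have hScover : ∀ i ∈ Sf, ∃ k, s k = i := by
      intro i hi
      exact ⟨σ.symm ⟨i, hi⟩, by simp [hs]⟩
    obtain ⟨z0, hz0⟩ := Finset.card_eq_one.1 (show Zf.card = 1 by omega)
    have hZs : Zset = {z0} := by
      rw [← hZfZ, hz0]; simp
    have hwspan : ∀ k, w (s k) ∈ span F ({e z0} : Set A) := by
      intro k
      have := hwZ (s k)
      rw [hU, hZs, Set.image_singleton] at this
      exact this
    have hckex : ∀ k, ∃ c : F, c ≠ 0 ∧ w (s k) = c • e z0 := by
      intro k
      obtain ⟨a, ha⟩ := Submodule.mem_span_singleton.1 (hwspan k)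
      refine ⟨a, ?_, ha.symm⟩
      intro h0
      exact hsW k (by rw [← ha, h0, zero_smul])
    choose c hc0 hc using hckex
    set vf : Fin 6 → A := ![e (s 0), e (s 1), e (s 2), e (s 3), e (s 4), w (s 0)] with hvf
    have hez0 : e z0 = (c 0)⁻¹ • w (s 0) := by
      rw [hc 0, smul_smul, inv_mul_cancel₀ (hc0 0), one_smul]
    have hvspan : ⊤ ≤ span F (Set.range vf) := by
      refine le_trans (le_of_eq e.span_eq.symm) (span_le.2 ?_)
      rintro x ⟨j, rfl⟩
      rcases hcover j with hj | hj
      · obtain ⟨k, rfl⟩ := hScover j hj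
        fin_cases k
        · exact subset_span ⟨0, rfl⟩
        · exact subset_span ⟨1, rfl⟩
        · exact subset_span ⟨2, rfl⟩
        · exact subset_span ⟨3, rfl⟩
        · exact subset_span ⟨4, rfl⟩
      · have hjz : j = z0 := by
          rw [hz0] at hj; simpa using hj
        subst hjz
        rw [hez0]
        exact Submodule.smul_mem _ _ (subset_span ⟨5, rfl⟩)
    set v : Basis (Fin 6) F A := basisOfTopLeSpanOfCardEqFinrank vf hvspan hcard with hvdef
    have hv : ⇑v = vf := coe_basisOfTopLeSpanOfCardEqFinrank vf hvspan hcard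
    refine ⟨v, ?_, Or.inl ⟨c 1 * (c 0)⁻¹, c 2 * (c 0)⁻¹, c 3 * (c 0)⁻¹, c 4 * (c 0)⁻¹,
      mul_ne_zero (hc0 1) (inv_ne_zero (hc0 0)), mul_ne_zero (hc0 2) (inv_ne_zero (hc0 0)),
      mul_ne_zero (hc0 3) (inv_ne_zero (hc0 0)), mul_ne_zero (hc0 4) (inv_ne_zero (hc0 0)),
      ?_, ?_, ?_, ?_, ?_, ?_⟩⟩
    · intro i j hij
      rw [hv]
      fin_cases i <;> fin_cases j <;>
        first
          | exact absurd rfl hij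
          | exact Hw _ _
          | (rw [hcomm]; exact Hw _ _)
          | exact hnat _ _ (fun hh => absurd (hsinj hh) (by decide))
    · rw [hv]; rfl
    · rw [hv]
      show w (s 1) = (c 1 * (c 0)⁻¹) • w (s 0)
      rw [hc 1, hc 0, smul_smul]
      congr 1
      field_simp [hc0 0]
    · rw [hv]
      show w (s 2) = (c 2 * (c 0)⁻¹) • w (s 0)
      rw [hc 2, hc 0, smul_smul]
      congr 1
      field_simp [hc0 0]
    · rw [hv]
      show w (s 3) = (c 3 * (c 0)⁻¹) • w (s 0)
      rw [hc 3, hc 0, smul_smul]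
      congr 1
      field_simp [hc0 0]
    · rw [hv]
      show w (s 4) = (c 4 * (c 0)⁻¹) • w (s 0)
      rw [hc 4, hc 0, smul_smul]
      congr 1
      field_simp [hc0 0]
    · rw [hv]
      exact Hw _ _
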